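/- If f is a monoid automorphism of P_fin0(ℕ), then f({0, 2, 3}) = {0, 1, 3} or f({0, 2, 3}) = {0, 2, 3}. -/

import Mathlib

open Pointwise

/-- The reduced power monoid `P_fin0(ℕ)`: finite subsets of ℕ containing 0,
under setwise (pointwise) addition. -/
def P0 : AddSubmonoid (Finset ℕ) where
  carrier := {X : Finset ℕ | (0 : ℕ) ∈ X}
  add_mem' := fun hx hy => by simpa using Finset.add_mem_add hx hy
  zero_mem' := by simp [Finset.mem_zero]

/-- Maximum of a set in `P0`. -/
def mx (X : P0) : ℕ := X.1.max' ⟨0, X.2⟩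

theorem mem_P0 {X : Finset ℕ} : X ∈ P0 ↔ (0 : ℕ) ∈ X := Iff.rfl

lemma P0.coe_add (X Y : P0) : (X + Y).1 = X.1 + Y.1 := rfl

lemma mx_mem (X : P0) : mx X ∈ X.1 := Finset.max'_mem _ _

lemma le_mx {X : P0} {x : ℕ} (h : x ∈ X.1) : x ≤ mx X := Finset.le_max' _ _ h

lemma subset_add_right (X Y : P0) : X.1 ⊆ (X + Y).1 := by
  intro x hx
  rw [P0.coe_add, Finset.mem_add]
  exact ⟨x, hx, 0, Y.2, add_zero x⟩

lemma mx_add (X Y : P0) : mx (X + Y) = mx X + mx Y := by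
  apply le_antisymm
  · apply Finset.max'_le
    intro t ht
    rw [P0.coe_add, Finset.mem_add] at ht
    obtain ⟨x, hx, y, hy, rfl⟩ := ht
    exact add_le_add (le_mx hx) (le_mx hy)
  · apply Finset.le_max'
    rw [P0.coe_add, Finset.mem_add]
    exact ⟨_, mx_mem X, _, mx_mem Y, rfl⟩

/-- The interval `[0,n]` as an element of `P0`. -/
def R (n : ℕ) : P0 := ⟨Finset.range (n + 1), mem_P0.mpr (Finset.mem_range.mpr (Nat.succ_pos n))⟩

lemma mx_R (n : ℕ) : mx (R n) = n := by
  apply le_antisymm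
  · apply Finset.max'_le
    intro t ht
    have := Finset.mem_range.mp ht
    omega
  · exact le_mx (by simp [R])

lemma add_R (X : P0) (N : ℕ) (h : mx X ≤ N + 1) : X + R N = R (N + mx X) := by
  apply Subtype.ext
  rw [P0.coe_add]
  ext t
  simp only [R, Finset.mem_add, Finset.mem_range]
  constructor
  · rintro ⟨x, hx, y, hy, rfl⟩
    have h1 := le_mx (X := X) hx
    omega
  · intro ht
    by_cases hc : t ≤ N
    · exact ⟨0, X.2, t, by omega, by omega⟩
    · exact ⟨mx X, mx_mem X, t - mx X, by omega, by omega⟩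

lemma mx_hom (f : P0 ≃+ P0) : ∃ a, ∀ X : P0, mx (f X) = mx X * a := by
  refine ⟨mx (f (R 1)), fun X => ?_⟩
  set a := mx (f (R 1)) with ha
  have hR : ∀ N, mx (f (R N)) = N * a := by
    intro N
    induction N with
    | zero =>
      have h0 : R 0 = 0 := Subtype.ext (by decide)
      rw [h0, map_zero]
      simp [mx]
    | succ n ih =>
      have h1 : R 1 + R n = R (n + 1) := by
        have := add_R (R 1) n (by rw [mx_R]; omega)
        rwa [mx_R] at this
      rw [← h1, map_add, mx_add, ih, ← ha]
      ring
  have h2 : X + R (mx X) = R (mx X + mx X) := add_R X (mx X) (by omega)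
  have h3 := congrArg f h2
  rw [map_add, ] at h3
  have h4 := congrArg mx h3
  rw [mx_add, hR, hR] at h4
  have : (mx X + mx X) * a = mx X * a + mx X * a := by ring
  omega

lemma mx_f (f : P0 ≃+ P0) (X : P0) : mx (f X) = mx X := by
  obtain ⟨a, hfa⟩ := mx_hom f
  obtain ⟨b, hfb⟩ := mx_hom f.symm
  have key : mx (R 1) = mx (R 1) * a * b := by
    conv_lhs => rw [← f.symm_apply_apply (R 1)]
    rw [hfb, hfa]
  rw [mx_R, one_mul] at key
  have ha : a = 1 := Nat.eq_one_of_mul_eq_one_right key.symm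
  rw [hfa, ha, mul_one]

/-- f fixes the interval [0,1]. -/
lemma f_fix_R1 (f : P0 ≃+ P0) : f (R 1) = R 1 := by
  have hmx : mx (f (R 1)) = 1 := by rw [mx_f, mx_R]
  have h0 : (0 : ℕ) ∈ (f (R 1)).1 := (f (R 1)).2
  have h1 : (1 : ℕ) ∈ (f (R 1)).1 := by
    have := mx_mem (f (R 1)); rwa [hmx] at this
  apply Subtype.ext
  ext x
  constructor
  · intro hx
    have h := le_mx hx
    rw [hmx] at h
    exact Finset.mem_range.mpr (by omega)
  · intro hx
    have hx2 : x < 2 := Finset.mem_range.mp hx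
    interval_cases x
    · exact h0
    · exact h1

lemma f_fix_R3 (f : P0 ≃+ P0) : f (R 3) = R 3 := by
  have e1 : R 1 + R 1 = R 2 := by
    have := add_R (R 1) 1 (by rw [mx_R]; omega); rwa [mx_R] at this
  have e2 : R 1 + R 2 = R 3 := by
    have := add_R (R 1) 2 (by rw [mx_R]; omega) ; rwa [mx_R, add_comm (R 1)] at this
  rw [← e2, ← e1, map_add, map_add, f_fix_R1]

/-- Key enumeration for subsets of {0,1,2,3}. -/
lemma enum (S : Finset ℕ) (hsub : ∀ x ∈ S, x ≤ 3) (h0 : 0 ∈ S) (h3 : 3 ∈ S)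
    (hne1 : S ≠ {0, 3}) (hne2 : S ≠ Finset.range 4) :
    S = {0, 1, 3} ∨ S = {0, 2, 3} := by
  by_cases h1 : 1 ∈ S <;> by_cases h2 : 2 ∈ S
  · exfalso; apply hne2
    ext x
    simp only [Finset.mem_range]
    constructor
    · intro hx; have := hsub x hx; omega
    · intro hx; interval_cases x <;> assumption
  · left
    ext x
    simp only [Finset.mem_insert, Finset.mem_singleton]
    constructor
    · intro hx
      have := hsub x hx
      interval_cases x
      · omega
      · omega
      · exact absurd hx h2
      · omega
    · rintro (rfl | rfl | rfl) <;> assumption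
  · right
    ext x
    simp only [Finset.mem_insert, Finset.mem_singleton]
    constructor
    · intro hx
      have := hsub x hx
      interval_cases x
      · omega
      · exact absurd hx h1
      · omega
      · omega
    · rintro (rfl | rfl | rfl) <;> assumption
  · exfalso; apply hne1
    ext x
    simp only [Finset.mem_insert, Finset.mem_singleton]
    constructor
    · intro hx
      have := hsub x hx
      interval_cases x
      · omega
      · exact absurd hx h1
      · exact absurd hx h2
      · omega
    · rintro (rfl | rfl) <;> assumption

/-- an automorphism of P_fin0(ℕ) sends `{0,2,3}` either to
`{0,1,3}` or to `{0,2,3}`. -/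
theorem stmt13 (f : P0 ≃+ P0) :
    f ⟨({0, 2, 3} : Finset ℕ), by simp [mem_P0]⟩ = ⟨({0, 1, 3} : Finset ℕ), by simp [mem_P0]⟩ ∨
    f ⟨({0, 2, 3} : Finset ℕ), by simp [mem_P0]⟩ = ⟨({0, 2, 3} : Finset ℕ), by simp [mem_P0]⟩ := by
  set A : P0 := ⟨({0, 2, 3} : Finset ℕ), by simp [mem_P0]⟩ with hA
  have hmxA : mx A = 3 := by
    apply le_antisymm
    · apply Finset.max'_le; intro t ht; fin_cases ht <;> omega
    · exact le_mx (by simp [hA])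
  have hmxS : mx (f A) = 3 := by rw [mx_f, hmxA]
  set S : Finset ℕ := (f A).1 with hS
  have hsub : ∀ x ∈ S, x ≤ 3 := fun x hx => by
    have := le_mx hx; omega
  have h0 : 0 ∈ S := (f A).2
  have h3 : 3 ∈ S := by rw [← hmxS]; exact mx_mem _
  -- S ≠ range 4
  have hne2 : S ≠ Finset.range 4 := by
    intro hcon
    have : f A = R 3 := Subtype.ext hcon
    have : A = R 3 := by
      have := congrArg f.symm this
      rwa [f.symm_apply_apply, ← f_fix_R3 f, f.symm_apply_apply] at this
    have : A.1 = (R 3).1 := congrArg Subtype.val this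
    rw [hA] at this
    exact absurd this (by decide)
  -- S ≠ {0,3} : squaring trick
  have hne1 : S ≠ {0, 3} := by
    intro hcon
    have heq : (⟨({0, 2} : Finset ℕ), by simp [mem_P0]⟩ : P0) +
        ⟨({0, 3, 4} : Finset ℕ), by simp [mem_P0]⟩ = A + A := by
      apply Subtype.ext
      rw [P0.coe_add, P0.coe_add, hA]
      decide
    have heq2 := congrArg f heq
    rw [map_add, map_add] at heq2
    set D : P0 := f ⟨({0, 2} : Finset ℕ), by simp [mem_P0]⟩ with hD
    have hmxD : mx D = 2 := by
      rw [hD, mx_f]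
      apply le_antisymm
      · apply Finset.max'_le; intro t ht; fin_cases ht <;> omega
      · exact le_mx (by simp)
    have h2mem : (2 : ℕ) ∈ D.1 := by rw [← hmxD]; exact mx_mem _
    have hsub2 : D.1 ⊆ (f A + f A).1 := by
      rw [← heq2]; exact subset_add_right _ _
    have h2in : (2 : ℕ) ∈ (f A + f A).1 := hsub2 h2mem
    rw [P0.coe_add, ← hS, hcon] at h2in
    have : ({0, 3} : Finset ℕ) + {0, 3} = {0, 3, 6} := by decide
    rw [this] at h2in
    simp at h2in
  rcases enum S hsub h0 h3 hne1 hne2 with h | h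
  · left; exact Subtype.ext h
  · right; exact Subtype.ext h
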